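/- Let P be a partial transformation semigroup on a set of n states. Then the R-height of P is at most 2^n; that is, every R-chain in P has length at most 2^n. -/

import Mathlib

/-- Partial transformations on `Q` (partial functions `Q → Q`), with
left-to-right composition: `q·(fg) = (q·f)·g`. -/
def PTrans (Q : Type*) : Type _ := Q → Option Q

instance {Q : Type*} : Mul (PTrans Q) := ⟨fun f g => fun q => (f q).bind g⟩

instance {Q : Type*} : Semigroup (PTrans Q) where
  mul_assoc f g h := by
    funext q
    show ((f q).bind g).bind h = (f q).bind (fun x => (g x).bind h)
    cases f q <;> rfl

section Green
variable {S : Type*} [Semigroup S]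

/-- The right ideal `s·S¹` as a subset of `S¹ = WithOne S`. -/
def rIdeal (s : S) : Set (WithOne S) := {x | ∃ z : WithOne S, x = (s : WithOne S) * z}

/-- Green's preorder `s ≤_R t` : `sS¹ ⊆ tS¹`. -/
def leR (s t : S) : Prop := rIdeal s ⊆ rIdeal t

/-- Green's strict order `s <_R t`. -/
def ltR (s t : S) : Prop := leR s t ∧ ¬ leR t s

/-- An `R`-chain `(s 0, s 1, …, s (ℓ-1))` of length `ℓ`: each element is strictly
`R`-below its predecessor. -/
def IsRChain (ℓ : ℕ) (s : ℕ → S) : Prop := ∀ i : ℕ, i + 1 < ℓ → ltR (s (i + 1)) (s i)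

end Green

/-! ### Auxiliary material -/

namespace RHeightAux

variable {Q : Type} [Fintype Q]

instance : One (PTrans Q) := ⟨fun q => some q⟩

instance : MulOneClass (PTrans Q) where
  one_mul f := rfl
  mul_one f := by
    funext q
    show (f q).bind some = f q
    cases f q <;> rfl

instance : Monoid (PTrans Q) :=
  { (inferInstance : Semigroup (PTrans Q)), (inferInstance : MulOneClass (PTrans Q)) with }

instance : Finite (PTrans Q) := inferInstanceAs (Finite (Q → Option Q))

/-- The image of a partial transformation. -/
def img (f : PTrans Q) : Set Q := {q | ∃ p, f p = some q}

lemma mem_img_mul {f g : PTrans Q} {q : Q} :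
    q ∈ img (f * g) ↔ ∃ a ∈ img f, g a = some q := by
  constructor
  · rintro ⟨p, hp⟩
    have hp' : (f p).bind g = some q := hp
    obtain ⟨a, ha, hg⟩ := Option.bind_eq_some_iff.mp hp'
    exact ⟨a, ⟨p, ha⟩, hg⟩
  · rintro ⟨a, ⟨p, hp⟩, hg⟩
    exact ⟨p, show (f p).bind g = some q by rw [hp]; exact hg⟩

/-- Key combinatorial lemma: if multiplying by `w` preserves the image of `f`,
then some positive power of `w` acts as the identity after `f`. -/
lemma exists_pow_eq (f w : PTrans Q) (h : img (f * w) = img f) :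
    ∃ k : ℕ, f * w ^ (k + 1) = f := by
  classical
  set A := img f with hA
  have hsurj : ∀ q ∈ A, ∃ a ∈ A, w a = some q := by
    intro q hq
    have hq' : q ∈ img (f * w) := by rw [h]; exact hq
    exact mem_img_mul.mp hq'
  set A' : Set Q := {a ∈ A | (w a).isSome} with hA'
  set g : Q → Q := fun q => (w q).getD q with hg
  have hgeq : ∀ a b : Q, w a = some b → g a = b := by
    intro a b hw
    simp [hg, hw]
  have hsurj' : Set.SurjOn g A' A := by
    intro q hq
    obtain ⟨a, ha, hw⟩ := hsurj q hq
    exact ⟨a, ⟨ha, by rw [hw]; rfl⟩, hgeq a q hw⟩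
  have hA'A : A' ⊆ A := fun a ha => ha.1
  have hcard : A.ncard ≤ A'.ncard := by
    have hsub2 : A ⊆ g '' A' := fun q hq => hsurj' hq
    calc A.ncard ≤ (g '' A').ncard := Set.ncard_le_ncard hsub2 (Set.toFinite _)
    _ ≤ A'.ncard := Set.ncard_image_le (Set.toFinite _)
  have hA'eq : A' = A := Set.eq_of_subset_of_ncard_le hA'A hcard (Set.toFinite _)
  have hdom : ∀ a ∈ A, w a = some (g a) := by
    intro a ha
    have ha' : a ∈ A' := by rw [hA'eq]; exact ha
    obtain ⟨b, hb⟩ := Option.isSome_iff_exists.mp ha'.2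
    rw [hb, hgeq a b hb]
  have hmaps : Set.MapsTo g A A := by
    intro a ha
    have : g a ∈ img (f * w) := mem_img_mul.mpr ⟨a, ha, hdom a ha⟩
    rw [h] at this; exact this
  have hGsurj : Set.SurjOn g A A := by
    intro q hq
    obtain ⟨a, ha, hw⟩ := hsurj q hq
    exact ⟨a, ha, hgeq a q hw⟩
  have hinj : Set.InjOn g A :=
    (((Set.toFinite A).surjOn_iff_bijOn_of_mapsTo hmaps).mp hGsurj).injOn
  have hmaps_it : ∀ m, Set.MapsTo (g^[m]) A A := fun m => hmaps.iterate m
  have hinj_it : ∀ m, Set.InjOn (g^[m]) A := by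
    intro m
    induction m with
    | zero => simpa using Set.injOn_id A
    | succ m ih =>
      rw [Function.iterate_succ]
      intro a ha b hb hab
      exact hinj ha hb (ih (hmaps ha) (hmaps hb) hab)
  -- pigeonhole: some positive iterate of `g` is the identity on `A`
  have main : ∀ i j : ℕ, i < j → ((fun a : A => g^[i] a.1) = fun a : A => g^[j] a.1) →
      ∃ d : ℕ, ∀ a ∈ A, g^[d + 1] a = a := by
    intro i j hij heq
    refine ⟨j - i - 1, ?_⟩
    intro a ha
    have hji : j - i - 1 + 1 = j - i := by omega
    rw [hji]
    have hsplit : g^[j] a = g^[i] (g^[j - i] a) := by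
      conv_lhs => rw [show j = i + (j - i) by omega]
      rw [Function.iterate_add_apply]
    have h1 : g^[i] a = g^[i] (g^[j - i] a) := by
      rw [← hsplit]
      exact congrFun heq ⟨a, ha⟩
    exact (hinj_it i ha (hmaps_it (j - i) ha) h1).symm
  obtain ⟨i, j, hne, heq⟩ :=
    Finite.exists_ne_map_eq_of_infinite (fun m : ℕ => fun a : A => g^[m] a.1)
  have hid : ∃ d : ℕ, ∀ a ∈ A, g^[d + 1] a = a := by
    rcases hne.lt_or_gt with hlt | hlt
    · exact main i j hlt heq
    · exact main j i hlt heq.symm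
  obtain ⟨d, hd⟩ := hid
  -- powers of `w` follow iterates of `g` on `A`
  have hpow : ∀ m, ∀ a ∈ A, (w ^ m) a = some (g^[m] a) := by
    intro m
    induction m with
    | zero =>
      intro a ha
      rw [pow_zero]
      rfl
    | succ m ih =>
      intro a ha
      have h1 : (w ^ (m + 1)) a = ((w ^ m) a).bind w := by rw [pow_succ]; rfl
      rw [h1, ih a ha]
      show w (g^[m] a) = some (g^[m + 1] a)
      rw [hdom _ (hmaps_it m ha), Function.iterate_succ_apply']
  refine ⟨d, ?_⟩
  funext q
  show (f q).bind (w ^ (d + 1)) = f q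
  cases hfq : f q with
  | none => rfl
  | some a =>
    have ha : a ∈ A := ⟨q, hfq⟩
    show (w ^ (d + 1)) a = some a
    rw [hpow (d + 1) a ha, hd a ha]

variable (P : Subsemigroup (PTrans Q))

/-- Evaluation of elements of `P¹` as partial transformations. -/
noncomputable def ap : WithOne ↥P →* PTrans Q := WithOne.lift (MulMemClass.subtype P)

lemma ap_coe (a : ↥P) : ap P (a : WithOne ↥P) = (a : PTrans Q) :=
  WithOne.lift_coe _ _

/-- The invariant: the collection of images of elements of `a·P¹`. -/
def Cl (a : ↥P) : Set (Set Q) := (fun x => img (ap P x)) '' rIdeal a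

lemma self_mem_rIdeal (a : ↥P) : (a : WithOne ↥P) ∈ rIdeal a :=
  ⟨1, (mul_one _).symm⟩

lemma Cl_nonempty (a : ↥P) : (Cl P a).Nonempty :=
  ⟨_, ⟨_, self_mem_rIdeal P a, rfl⟩⟩

lemma Cl_ssubset {a b : ↥P} (h : ltR a b) : Cl P a ⊂ Cl P b := by
  refine ⟨Set.image_mono h.1, fun hsub => h.2 ?_⟩
  -- `hsub : Cl P b ⊆ Cl P a`; derive `leR b a` for a contradiction
  obtain ⟨x, hx, hximg⟩ := hsub ⟨(b : WithOne ↥P), self_mem_rIdeal P b, rfl⟩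
  obtain ⟨y, rfl⟩ := hx
  obtain ⟨z, haz⟩ := h.1 (self_mem_rIdeal P a)
  set w : WithOne ↥P := z * y with hw
  have hx2 : ((a : WithOne ↥P) * y) = (b : WithOne ↥P) * w := by
    rw [hw, haz, mul_assoc]
  have himg : img (ap P ((b : WithOne ↥P) * w)) = img (ap P (b : WithOne ↥P)) := by
    rw [← hx2]; exact hximg
  rw [map_mul] at himg
  obtain ⟨k, hk⟩ := exists_pow_eq (ap P (b : WithOne ↥P)) (ap P w) himg
  have hap : ap P ((a : WithOne ↥P) * (y * w ^ k)) = ap P (b : WithOne ↥P) := by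
    have hfac : (a : WithOne ↥P) * (y * w ^ k) = (b : WithOne ↥P) * w ^ (k + 1) := by
      calc (a : WithOne ↥P) * (y * w ^ k) = ((a : WithOne ↥P) * y) * w ^ k :=
            (mul_assoc _ _ _).symm
      _ = ((b : WithOne ↥P) * w) * w ^ k := by rw [hx2]
      _ = (b : WithOne ↥P) * (w * w ^ k) := mul_assoc _ _ _
      _ = (b : WithOne ↥P) * w ^ (k + 1) := by rw [← pow_succ']
    rw [hfac, map_mul, map_pow]
    exact hk
  -- conclude `leR b a`
  set v : WithOne ↥P := y * w ^ k with hv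
  clear_value v
  rcases eq_or_ne v 1 with rfl | hne
  · rw [mul_one, ap_coe, ap_coe] at hap
    have : a = b := Subtype.ext hap
    rw [← this]
    exact fun m hm => hm
  · obtain ⟨v', rfl⟩ := WithOne.ne_one_iff_exists.mp hne
    have hcoe : (a : WithOne ↥P) * (v' : WithOne ↥P) = ((a * v' : ↥P) : WithOne ↥P) := rfl
    rw [hcoe, ap_coe, ap_coe] at hap
    have hba : (b : WithOne ↥P) = (a : WithOne ↥P) * v' := by
      rw [hcoe, WithOne.coe_inj]
      exact (Subtype.ext hap).symm
    rintro m ⟨u, rfl⟩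
    exact ⟨(v' : WithOne ↥P) * u, by rw [hba, mul_assoc]⟩

end RHeightAux

/-- The `R`-height of a partial transformation semigroup on `n`
states is at most `2 ^ n`: every `R`-chain has length at most `2 ^ n`. -/
theorem R_height_le_two_pow
    (n : ℕ) (Q : Type) [Fintype Q] (hQ : Fintype.card Q = n)
    (P : Subsemigroup (PTrans Q))
    (ℓ : ℕ) (s : ℕ → ↥P) (hs : IsRChain ℓ s) :
    ℓ ≤ 2 ^ n := by
  classical
  open RHeightAux in
  match ℓ, hs with
  | 0, _ => exact Nat.zero_le _
  | (m + 1), hs =>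
    set N : ℕ → ℕ := fun i => (RHeightAux.Cl P (s i)).ncard with hN
    have hdec : ∀ i, i + 1 < m + 1 → N (i + 1) < N i := by
      intro i hi
      exact Set.ncard_lt_ncard (RHeightAux.Cl_ssubset P (hs i hi)) (Set.toFinite _)
    have key : ∀ i, i < m + 1 → N i + i ≤ N 0 := by
      intro i
      induction i with
      | zero => intro _; simp
      | succ i ih =>
        intro hi
        have h1 : N (i + 1) < N i := hdec i hi
        have h2 : N i + i ≤ N 0 := ih (by omega)
        omega
    have hpos : 1 ≤ N m :=
      (Set.ncard_pos (Set.toFinite _)).mpr (RHeightAux.Cl_nonempty P (s m))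
    have htop : N 0 ≤ 2 ^ n := by
      calc N 0 ≤ (Set.univ : Set (Set Q)).ncard :=
            Set.ncard_le_ncard (Set.subset_univ _) (Set.toFinite _)
      _ = Nat.card (Set Q) := Set.ncard_univ _
      _ = Fintype.card (Set Q) := Nat.card_eq_fintype_card
      _ = 2 ^ Fintype.card Q := Fintype.card_set
      _ = 2 ^ n := by rw [hQ]
    have := key m (by omega)
    omega
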